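/- For all multisets S and T of integers: S ≻ms T holds if and only if List.Lex (· < ·) lT lS holds, where lS and lT are the lists of elements of S and T, respectively, sorted in non-increasing order (so that the sorted list of T is lexicographically smaller than that of S, with the convention that a proper prefix of a list is smaller than the list). -/

import Mathlib

/-- The maximum of a multiset of integers (0 for the empty multiset; only used on nonempty ones). -/
def mmax (S : Multiset ℤ) : ℤ := WithBot.unbotD 0 ((S.map (fun x => (x : WithBot ℤ))).sup)

/-- The minimum of a multiset of integers (0 for the empty multiset; only used on nonempty ones). -/
def mmin (S : Multiset ℤ) : ℤ := WithTop.untopD 0 ((S.map (fun x => (x : WithTop ℤ))).inf)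

/-- max order, weak: S ≿max T. -/
def geMax (S T : Multiset ℤ) : Prop := T = 0 ∨ (S ≠ 0 ∧ T ≠ 0 ∧ mmax S ≥ mmax T)

/-- max order, strict: S ≻max T. -/
def gtMax (S T : Multiset ℤ) : Prop := (S ≠ 0 ∧ T ≠ 0 ∧ mmax S > mmax T) ∨ (S ≠ 0 ∧ T = 0)

/-- min order, weak: S ≿min T. -/
def geMin (S T : Multiset ℤ) : Prop := S = 0 ∨ (S ≠ 0 ∧ T ≠ 0 ∧ mmin S ≥ mmin T)

/-- min order, strict: S ≻min T. -/
def gtMin (S T : Multiset ℤ) : Prop := (S ≠ 0 ∧ T ≠ 0 ∧ mmin S > mmin T) ∨ (S = 0 ∧ T ≠ 0)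

/-- multiset order, strict: S ≻ms T. -/
def gtMS (S T : Multiset ℤ) : Prop :=
  ∃ W U V : Multiset ℤ, U ≠ 0 ∧ S = W + U ∧ T = W + V ∧ gtMax U V

/-- multiset order, weak: S ≿ms T. -/
def geMS (S T : Multiset ℤ) : Prop := gtMS S T ∨ S = T

/-- dual multiset order, strict: S ≻dms T. -/
def gtDMS (S T : Multiset ℤ) : Prop :=
  ∃ W U V : Multiset ℤ, V ≠ 0 ∧ S = W + U ∧ T = W + V ∧ gtMin U V

/-- dual multiset order, weak: S ≿dms T. -/
def geDMS (S T : Multiset ℤ) : Prop := gtDMS S T ∨ S = T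

lemma exists_max {S : Multiset ℤ} (hS : S ≠ 0) : ∃ m ∈ S, ∀ y ∈ S, y ≤ m := by
  induction S using Multiset.induction with
  | empty => simp at hS
  | cons a S ih =>
    by_cases h : S = 0
    · subst h
      exact ⟨a, Multiset.mem_cons_self _ _, by intro y hy; simp at hy; omega⟩
    · obtain ⟨m, hm, hle⟩ := ih h
      refine ⟨max a m, ?_, ?_⟩
      · rcases max_cases a m with ⟨he, _⟩ | ⟨he, _⟩
        · rw [he]; exact Multiset.mem_cons_self _ _
        · rw [he]; exact Multiset.mem_cons_of_mem hm
      · intro y hy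
        rcases Multiset.mem_cons.mp hy with rfl | hy
        · exact le_max_left _ _
        · exact le_trans (hle y hy) (le_max_right _ _)

lemma mmax_eq (S : Multiset ℤ) : mmax S = WithBot.unbotD 0 ((S.map (fun x : ℤ => (x : WithBot ℤ))).sup) := by
  simp [mmax]

lemma mmax_spec {S : Multiset ℤ} (hS : S ≠ 0) : mmax S ∈ S ∧ ∀ y ∈ S, y ≤ mmax S := by
  obtain ⟨m, hm, hle⟩ := exists_max hS
  have hsup : (S.map (fun x : ℤ => (x : WithBot ℤ))).sup = (m : WithBot ℤ) := by
    apply le_antisymm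
    · rw [Multiset.sup_le]
      intro b hb
      obtain ⟨y, hy, rfl⟩ := Multiset.mem_map.mp hb
      exact_mod_cast hle y hy
    · exact Multiset.le_sup (Multiset.mem_map.mpr ⟨m, hm, rfl⟩)
  have : mmax S = m := by rw [mmax_eq, hsup]; rfl
  rw [this]
  exact ⟨hm, hle⟩

lemma gtMS_iff_count (S T : Multiset ℤ) :
    gtMS S T ↔ ∃ x : ℤ, T.count x < S.count x ∧ ∀ y, x < y → T.count y = S.count y := by
  constructor
  · rintro ⟨W, U, V, hU, rfl, rfl, hgt⟩
    refine ⟨mmax U, ?_, ?_⟩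
    · obtain ⟨hmem, hle⟩ := mmax_spec hU
      have hUc : 0 < U.count (mmax U) := Multiset.count_pos.mpr hmem
      have hVc : V.count (mmax U) = 0 := by
        rw [Multiset.count_eq_zero]
        intro hmemV
        rcases hgt with ⟨_, hV, hmm⟩ | ⟨_, rfl⟩
        · exact absurd ((mmax_spec hV).2 _ hmemV) (not_le.mpr hmm)
        · simp at hmemV
      simp only [Multiset.count_add, hVc]
      omega
    · intro y hy
      obtain ⟨_, hle⟩ := mmax_spec hU
      have hUc : U.count y = 0 := by
        rw [Multiset.count_eq_zero]
        intro hm; exact absurd (hle y hm) (not_le.mpr hy)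
      have hVc : V.count y = 0 := by
        rw [Multiset.count_eq_zero]
        intro hmemV
        rcases hgt with ⟨_, hV, hmm⟩ | ⟨_, rfl⟩
        · have := (mmax_spec hV).2 _ hmemV
          omega
        · simp at hmemV
      simp [Multiset.count_add, hUc, hVc]
  · rintro ⟨x, hx, hab⟩
    refine ⟨S ∩ T, S - T, T - S, ?_, ?_, ?_, ?_⟩
    · intro h0
      have := congrArg (Multiset.count x) h0
      rw [Multiset.count_sub] at this
      simp at this
      omega
    · rw [add_comm]; exact (Multiset.sub_add_inter S T).symm
    · rw [add_comm, Multiset.inter_comm]; exact (Multiset.sub_add_inter T S).symm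
    · have hU : S - T ≠ 0 := by
        intro h0
        have := congrArg (Multiset.count x) h0
        rw [Multiset.count_sub] at this
        simp at this
        omega
      by_cases hV : T - S = 0
      · exact Or.inr ⟨hU, hV⟩
      · left
        refine ⟨hU, hV, ?_⟩
        have hxU : x ∈ S - T := by
          rw [← Multiset.count_pos, Multiset.count_sub]; omega
        have h1 : x ≤ mmax (S - T) := (mmax_spec hU).2 _ hxU
        have h2 : mmax (T - S) < x := by
          have hmem := (mmax_spec hV).1
          have hc : 0 < (T - S).count (mmax (T - S)) := Multiset.count_pos.mpr hmem
          rw [Multiset.count_sub] at hc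
          by_contra hle
          push_neg at hle
          rcases eq_or_lt_of_le hle with heq | hlt
          · rw [heq] at hx; omega
          · have := hab _ hlt; omega
        omega

lemma lex_iff_count : ∀ (l₁ l₂ : List ℤ), l₁.Pairwise (· ≥ ·) → l₂.Pairwise (· ≥ ·) →
    (List.Lex (· < ·) l₂ l₁ ↔
      ∃ x : ℤ, l₂.count x < l₁.count x ∧ ∀ y, x < y → l₂.count y = l₁.count y)
  | [], l₂, _, _ => by
      constructor
      · intro h; exact absurd h (List.not_lex_nil)
      · rintro ⟨x, hx, -⟩; simp at hx
  | a :: l₁, [], h₁, _ => by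
      constructor
      · intro _
        obtain ⟨ha, h₁'⟩ := List.pairwise_cons.mp h₁
        refine ⟨a, by simp, fun y hy => ?_⟩
        simp only [List.count_nil]
        symm
        rw [List.count_eq_zero]
        intro hm
        rcases List.mem_cons.mp hm with rfl | hm
        · omega
        · have := ha _ hm; omega
      · intro _; exact List.Lex.nil
  | a :: l₁, b :: l₂, h₁, h₂ => by
      obtain ⟨ha, h₁'⟩ := List.pairwise_cons.mp h₁
      obtain ⟨hb, h₂'⟩ := List.pairwise_cons.mp h₂
      rcases lt_trichotomy b a with hba | rfl | hba
      · constructor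
        · intro _
          refine ⟨a, ?_, fun y hy => ?_⟩
          · have hc2 : (b :: l₂).count a = 0 := by
              rw [List.count_eq_zero]
              intro hm
              rcases List.mem_cons.mp hm with rfl | hm
              · omega
              · have := hb _ hm; omega
            rw [hc2]
            simp [List.count_cons]
          · have hc1 : (a :: l₁).count y = 0 := by
              rw [List.count_eq_zero]
              intro hm
              rcases List.mem_cons.mp hm with rfl | hm
              · omega
              · have := ha _ hm; omega
            have hc2 : (b :: l₂).count y = 0 := by
              rw [List.count_eq_zero]
              intro hm
              rcases List.mem_cons.mp hm with rfl | hm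
              · omega
              · have := hb _ hm; omega
            rw [hc1, hc2]
        · intro _; exact List.Lex.rel hba
      · have ih := lex_iff_count l₁ l₂ h₁' h₂'
        constructor
        · intro h
          have htail : List.Lex (· < ·) l₂ l₁ := by
            cases h with
            | rel h => omega
            | cons h => exact h
          obtain ⟨x, hx, hy⟩ := ih.mp htail
          refine ⟨x, ?_, fun y hyx => ?_⟩
          · simp only [List.count_cons]; omega
          · have := hy y hyx; simp only [List.count_cons]; omega
        · rintro ⟨x, hx, hy⟩
          refine List.Lex.cons (ih.mpr ⟨x, ?_, fun y hyx => ?_⟩)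
          · simp only [List.count_cons] at hx; omega
          · have := hy y hyx; simp only [List.count_cons] at this; omega
      · constructor
        · intro h
          cases h with
          | rel h => omega
          | cons h => omega
        · rintro ⟨x, hx, hy⟩
          exfalso
          have hc1 : (a :: l₁).count b = 0 := by
            rw [List.count_eq_zero]
            intro hm
            rcases List.mem_cons.mp hm with rfl | hm
            · omega
            · have := ha _ hm; omega
          have hc2 : 0 < (b :: l₂).count b := by simp [List.count_cons]
          have hbx : b ≤ x := by
            by_contra hc
            push_neg at hc
            have := hy b hc
            omega
          have hc1' : (a :: l₁).count x = 0 := by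
            rw [List.count_eq_zero]
            intro hm
            rcases List.mem_cons.mp hm with rfl | hm
            · omega
            · have := ha _ hm; omega
          omega

/-- `S ≻ms T` iff the list of elements of `T` sorted in non-increasing order is
lexicographically (w.r.t. `<`, proper prefixes being smaller) smaller than that of `S`. -/
theorem gtMS_iff_lex (S T : Multiset ℤ) :
    gtMS S T ↔
      List.Lex (· < ·) ((Multiset.sort T (· ≤ ·)).reverse)
        ((Multiset.sort S (· ≤ ·)).reverse) := by
  have hsort : ∀ R : Multiset ℤ, ((Multiset.sort R (· ≤ ·)).reverse).Pairwise (· ≥ ·) := by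
    intro R
    rw [List.pairwise_reverse]
    exact (Multiset.pairwise_sort (s := R) (r := (· ≤ ·))).imp (fun h => h)
  have hcount : ∀ (R : Multiset ℤ) (x : ℤ),
      ((Multiset.sort R (· ≤ ·)).reverse).count x = R.count x := by
    intro R x
    rw [List.count_reverse, ← Multiset.coe_count, Multiset.sort_eq]
  rw [gtMS_iff_count, lex_iff_count _ _ (hsort S) (hsort T)]
  simp only [hcount]
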